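/- Let T_0, T_1, ... be bounded operators on an increasing chain of Hilbert spaces H_0 ⊆ H_1 ⊆ ..., with ‖T_n‖ ≤ c for all n, and suppose each T_{n+1} is a power dilation of T_n (i.e., P_{H_n} T_{n+1}^k |_{H_n} = T_n^k for all k ∈ ℕ). Let H be the closed span of ∪ H_n and P_n the orthogonal projection onto H_n. Then the sequence T_n P_n converges in the strong operator topology to an operator T ∈ B(H) with ‖T‖ ≤ c, and T is a power dilation of every T_n. -/

import Mathlib

open ContinuousLinearMap Filter Topology

/-- Bounded chains of power dilations: if `T n` acts on the increasing closed subspace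
`H_n = range (P n)`, `‖T n‖ ≤ c`, and each `T (n+1)` is a power dilation of `T n`
(`P n ∘ T (n+1)^k = T n ^ k` on `H_n` for all `k`), then the sequence `T n ∘ P n`
converges in the strong operator topology to an operator `S` with `‖S‖ ≤ c` which is a
power dilation of every `T n`. -/
theorem stmt6 {H : Type*} [NormedAddCommGroup H] [InnerProductSpace ℂ H] [CompleteSpace H]
    (P T : ℕ → H →L[ℂ] H) (c : ℝ)
    (hPproj : ∀ n, IsIdempotentElem (P n)) (hPsa : ∀ n, IsSelfAdjoint (P n))
    (hPmono : ∀ m n, m ≤ n → P n ∘L P m = P m)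
    (hdense : (⨆ n, LinearMap.range (P n : H →ₗ[ℂ] H)).topologicalClosure = ⊤)
    (hsupp : ∀ n, P n ∘L T n = T n ∧ T n ∘L P n = T n)
    (hnorm : ∀ n, ‖T n‖ ≤ c)
    (hdil : ∀ n k, ∀ h ∈ LinearMap.range (P n : H →ₗ[ℂ] H),
      P n ((T (n + 1) ^ k) h) = ((T n ^ k) h)) :
    ∃ S : H →L[ℂ] H, ‖S‖ ≤ c ∧
      (∀ x : H, Tendsto (fun n => T n (P n x)) atTop (𝓝 (S x))) ∧
      (∀ n k, ∀ h ∈ LinearMap.range (P n : H →ₗ[ℂ] H), P n ((S ^ k) h) = ((T n ^ k) h)) := by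
  classical
  have hc0 : 0 ≤ c := le_trans (norm_nonneg _) (hnorm 0)
  have hPP : ∀ {m n}, m ≤ n → ∀ x : H, P n (P m x) = P m x := by
    intro m n h x
    have := congrArg (fun A : H →L[ℂ] H => A x) (hPmono m n h)
    simpa using this
  have hPidem : ∀ n (x : H), P n (P n x) = P n x := by
    intro n x
    have := congrArg (fun A : H →L[ℂ] H => A x) (hPproj n)
    simpa [ContinuousLinearMap.mul_apply] using this
  have hQ : ∀ {m n}, m ≤ n → ∀ x : H, P m (P n x) = P m x := by
    intro m n h x
    have h2 := congrArg ContinuousLinearMap.adjoint (hPmono m n h)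
    rw [adjoint_comp, (hPsa m).adjoint_eq, (hPsa n).adjoint_eq] at h2
    simpa using congrArg (fun A : H →L[ℂ] H => A x) h2
  have hmem : ∀ {n} {h : H}, h ∈ LinearMap.range (P n : H →ₗ[ℂ] H) → P n h = h := by
    rintro n h ⟨y, rfl⟩; exact hPidem n y
  have hsym : ∀ n (x y : H), (inner ℂ (P n x) y : ℂ) = inner ℂ x (P n y) := by
    intro n x y
    have := adjoint_inner_left (P n) y x
    rwa [(hPsa n).adjoint_eq] at this
  have hP1 : ∀ n (x : H), ‖P n x‖ ≤ ‖x‖ := by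
    intro n x
    have key : ‖P n x‖ * ‖P n x‖ ≤ ‖x‖ * ‖P n x‖ := by
      have h1 : ‖P n x‖ ^ 2 = RCLike.re (inner ℂ x (P n x) : ℂ) := by
        rw [← inner_self_eq_norm_sq (𝕜 := ℂ) (P n x), hsym n x (P n x), hPidem]
      have h2 : RCLike.re (inner ℂ x (P n x) : ℂ) ≤ ‖(inner ℂ x (P n x) : ℂ)‖ :=
        RCLike.re_le_norm _
      have h3 : ‖(inner ℂ x (P n x) : ℂ)‖ ≤ ‖x‖ * ‖P n x‖ := norm_inner_le_norm _ _
      calc ‖P n x‖ * ‖P n x‖ = ‖P n x‖ ^ 2 := (sq _).symm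
        _ ≤ ‖x‖ * ‖P n x‖ := by rw [h1]; exact le_trans h2 h3
    rcases (norm_nonneg (P n x)).lt_or_eq with hd | hd
    · exact le_of_mul_le_mul_right key hd
    · rw [← hd]; exact norm_nonneg _
  have hAle : ∀ n (x : H), ‖T n (P n x)‖ ≤ c * ‖x‖ := fun n x =>
    le_trans ((T n).le_opNorm (P n x))
      (mul_le_mul (hnorm n) (hP1 n x) (norm_nonneg _) hc0)
  have hPT : ∀ n k (z : H), P n ((T n ^ (k + 1)) z) = (T n ^ (k + 1)) z := by
    intro n k z
    rw [pow_succ', ContinuousLinearMap.mul_apply]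
    have := congrArg (fun A : H →L[ℂ] H => A ((T n ^ k) z)) (hsupp n).1
    simpa using this
  have L1 : ∀ n j, n ≤ j → ∀ k (h : H), P n h = h → P n ((T j ^ k) h) = (T n ^ k) h := by
    intro n j hnj
    induction j, hnj using Nat.le_induction with
    | base =>
      intro k h hh
      cases k with
      | zero => simpa using hh
      | succ k => exact hPT n k h
    | succ j hj ih =>
      intro k h hh
      have hhj : P j h = h := by rw [← hh, hPP hj]
      have hmem' : h ∈ LinearMap.range (P j : H →ₗ[ℂ] H) := ⟨h, hhj⟩
      calc P n ((T (j + 1) ^ k) h) = P n (P j ((T (j + 1) ^ k) h)) := (hQ hj _).symm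
        _ = P n ((T j ^ k) h) := by rw [hdil j k h hmem']
        _ = (T n ^ k) h := ih k h hh
  have pyth : ∀ n (u : H), ‖u‖ ^ 2 = ‖P n u‖ ^ 2 + ‖u - P n u‖ ^ 2 := by
    intro n u
    have hz : RCLike.re (inner ℂ (P n u) (u - P n u) : ℂ) = 0 := by
      rw [hsym n u (u - P n u), map_sub, hPidem]
      simp
    have h2 := norm_add_sq (𝕜 := ℂ) (P n u) (u - P n u)
    rw [show P n u + (u - P n u) = u from by abel, hz] at h2
    simpa using h2
  have key2 : ∀ N (x : H), P N x = x → ∀ m m', N ≤ m → m ≤ m' →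
      ‖T m' x - T m x‖ ^ 2 = ‖T m' x‖ ^ 2 - ‖T m x‖ ^ 2 := by
    intro N x hx m m' hm hmm'
    have hxm : P m x = x := by rw [← hx, hPP (le_trans hm le_rfl)]
    have h1 : P m (T m' x) = T m x := by
      have := L1 m m' hmm' 1 x hxm
      simpa using this
    have hp := pyth m (T m' x)
    rw [h1] at hp
    linarith
  have hCauchyU : ∀ N (x : H), P N x = x → CauchySeq (fun n => T n (P n x)) := by
    intro N x hx
    have hxm : ∀ m, N ≤ m → P m x = x := fun m hm => by rw [← hx, hPP hm]
    set g : ℕ → ℝ := fun m => ‖T (N + m) x‖ ^ 2 with hg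
    have hgmono : Monotone g := by
      intro a b hab
      have hk := key2 N x hx (N + a) (N + b) (Nat.le_add_right _ _) (by omega)
      have h0 : (0 : ℝ) ≤ ‖T (N + b) x - T (N + a) x‖ ^ 2 := sq_nonneg _
      simp only [hg]
      linarith
    have hgbdd : BddAbove (Set.range g) := by
      refine ⟨(c * ‖x‖) ^ 2, ?_⟩
      rintro r ⟨m, rfl⟩
      have hb : ‖T (N + m) x‖ ≤ c * ‖x‖ := by
        have := hAle (N + m) x
        rwa [hxm (N + m) (Nat.le_add_right _ _)] at this
      exact pow_le_pow_left₀ (norm_nonneg _) hb 2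
    have hgC : CauchySeq g := (tendsto_atTop_ciSup hgmono hgbdd).cauchySeq
    rw [Metric.cauchySeq_iff] at hgC ⊢
    intro ε hε
    obtain ⟨M, hM⟩ := hgC (ε ^ 2) (by positivity)
    refine ⟨N + M, ?_⟩
    have main : ∀ a b, N + M ≤ a → N + M ≤ b → b ≤ a →
        dist (T a (P a x)) (T b (P b x)) < ε := by
      intro a b ha hb hba
      rw [hxm a (by omega), hxm b (by omega), dist_eq_norm]
      have h1 := key2 N x hx b a (by omega) hba
      have h2 := hM (a - N) (by omega) (b - N) (by omega)
      rw [Real.dist_eq] at h2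
      have e1 : N + (a - N) = a := by omega
      have e2 : N + (b - N) = b := by omega
      simp only [hg, e1, e2] at h2
      have h3 : ‖T a x - T b x‖ ^ 2 < ε ^ 2 := by
        rw [h1]
        calc ‖T a x‖ ^ 2 - ‖T b x‖ ^ 2 ≤ |‖T a x‖ ^ 2 - ‖T b x‖ ^ 2| := le_abs_self _
          _ < ε ^ 2 := h2
      exact lt_of_pow_lt_pow_left₀ 2 hε.le h3
    intro a ha b hb
    rcases le_total b a with h | h
    · exact main a b ha hb h
    · rw [dist_comm]; exact main b a hb ha h
  have hdense' : ∀ (x : H) (ε : ℝ), 0 < ε → ∃ (N : ℕ) (y : H), P N y = y ∧ ‖x - y‖ < ε := by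
    intro x ε hε
    have hx : x ∈ closure (↑(⨆ n, LinearMap.range (P n : H →ₗ[ℂ] H)) : Set H) := by
      rw [← Submodule.topologicalClosure_coe, hdense]
      simp
    rw [Metric.mem_closure_iff] at hx
    obtain ⟨y, hy, hxy⟩ := hx ε hε
    have hrm : Monotone fun n => LinearMap.range (P n : H →ₗ[ℂ] H) := by
      intro m n hmn z hz
      exact ⟨z, by rw [← hmem hz]; exact hPP hmn z⟩
    obtain ⟨N, hN⟩ := (Submodule.mem_iSup_of_chain ⟨fun n => LinearMap.range (P n : H →ₗ[ℂ] H), hrm⟩ y).mp hy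
    exact ⟨N, y, hmem hN, by rwa [← dist_eq_norm]⟩
  have hconv : ∀ x : H, ∃ L : H, Tendsto (fun n => T n (P n x)) atTop (𝓝 L) := by
    intro x
    have hC : CauchySeq (fun n => T n (P n x)) := by
      rw [Metric.cauchySeq_iff]
      intro ε hε
      obtain ⟨N, y, hy, hxy⟩ := hdense' x (ε / (3 * (c + 1))) (by positivity)
      have hCy := hCauchyU N y hy
      rw [Metric.cauchySeq_iff] at hCy
      obtain ⟨M, hM⟩ := hCy (ε / 3) (by positivity)
      refine ⟨M, fun a ha b hb => ?_⟩
      have hbound : ∀ j, ‖T j (P j x) - T j (P j y)‖ ≤ ε / 3 := by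
        intro j
        have he : T j (P j x) - T j (P j y) = T j (P j (x - y)) := by simp [map_sub]
        rw [he]
        calc ‖T j (P j (x - y))‖ ≤ c * ‖x - y‖ := hAle j (x - y)
          _ ≤ (c + 1) * (ε / (3 * (c + 1))) := by
              apply mul_le_mul (by linarith) hxy.le (norm_nonneg _) (by linarith)
          _ = ε / 3 := by field_simp
      calc dist (T a (P a x)) (T b (P b x)) ≤
            dist (T a (P a x)) (T a (P a y)) + dist (T a (P a y)) (T b (P b y)) +
              dist (T b (P b y)) (T b (P b x)) := dist_triangle4 _ _ _ _
        _ < ε := by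
            have h1 : dist (T a (P a x)) (T a (P a y)) ≤ ε / 3 := by
              rw [dist_eq_norm]; exact hbound a
            have h3 : dist (T b (P b y)) (T b (P b x)) ≤ ε / 3 := by
              rw [dist_comm, dist_eq_norm]; exact hbound b
            have h2 := hM a ha b hb
            linarith
    exact cauchySeq_tendsto_of_complete hC
  choose L hL using hconv
  have hLadd : ∀ x y, L (x + y) = L x + L y := by
    intro x y
    refine tendsto_nhds_unique (hL (x + y)) ?_
    have := (hL x).add (hL y)
    refine this.congr fun n => ?_
    simp [map_add]
  have hLsmul : ∀ (a : ℂ) x, L (a • x) = a • L x := by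
    intro a x
    refine tendsto_nhds_unique (hL (a • x)) ?_
    have := (hL x).const_smul a
    refine this.congr fun n => ?_
    simp [map_smul]
  have hLnorm : ∀ x, ‖L x‖ ≤ c * ‖x‖ := fun x =>
    le_of_tendsto (hL x).norm (Eventually.of_forall fun n => hAle n x)
  set Slin : H →ₗ[ℂ] H :=
    { toFun := L, map_add' := hLadd, map_smul' := fun a x => by simpa using hLsmul a x } with hSlin
  set S : H →L[ℂ] H := LinearMap.mkContinuous Slin c hLnorm with hS
  have hSapp : ∀ x, S x = L x := fun _ => rfl
  refine ⟨S, LinearMap.mkContinuous_norm_le _ hc0 _, fun x => hL x, ?_⟩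
  have hApow : ∀ n k (x : H), ((T n ∘L P n) ^ (k + 1)) x = (T n ^ (k + 1)) (P n x) := by
    intro n k
    induction k with
    | zero => intro x; simp [pow_one]
    | succ k ih =>
      intro x
      have e : ((T n ∘L P n) ^ (k + 1 + 1)) x = (T n ∘L P n) (((T n ∘L P n) ^ (k + 1)) x) := by
        rw [pow_succ', ContinuousLinearMap.mul_apply]
      rw [e, ih, ContinuousLinearMap.comp_apply, hPT n k (P n x),
        ← ContinuousLinearMap.mul_apply, ← pow_succ']
  have hSpow : ∀ k (x : H), Tendsto (fun n => ((T n ∘L P n) ^ k) x) atTop (𝓝 ((S ^ k) x)) := by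
    intro k
    induction k with
    | zero => intro x; simp only [pow_zero, ContinuousLinearMap.one_apply]; exact tendsto_const_nhds
    | succ k ih =>
      intro x
      rw [tendsto_iff_norm_sub_tendsto_zero]
      have hb : ∀ n, ‖((T n ∘L P n) ^ (k + 1)) x - (S ^ (k + 1)) x‖ ≤
          c * ‖((T n ∘L P n) ^ k) x - (S ^ k) x‖ + ‖T n (P n ((S ^ k) x)) - S ((S ^ k) x)‖ := by
        intro n
        have e1 : ((T n ∘L P n) ^ (k + 1)) x = T n (P n (((T n ∘L P n) ^ k) x)) := by
          rw [pow_succ', ContinuousLinearMap.mul_apply, ContinuousLinearMap.comp_apply]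
        have e2 : (S ^ (k + 1)) x = S ((S ^ k) x) := by
          rw [pow_succ', ContinuousLinearMap.mul_apply]
        rw [e1, e2]
        have tri : ‖T n (P n (((T n ∘L P n) ^ k) x)) - S ((S ^ k) x)‖ ≤
            ‖T n (P n (((T n ∘L P n) ^ k) x)) - T n (P n ((S ^ k) x))‖ +
              ‖T n (P n ((S ^ k) x)) - S ((S ^ k) x)‖ := by
          have := dist_triangle (T n (P n (((T n ∘L P n) ^ k) x))) (T n (P n ((S ^ k) x)))
            (S ((S ^ k) x))
          simpa [dist_eq_norm] using this
        refine le_trans tri (add_le_add_left ?_ _)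
        have he : T n (P n (((T n ∘L P n) ^ k) x)) - T n (P n ((S ^ k) x)) =
            T n (P n ((((T n ∘L P n) ^ k) x) - (S ^ k) x)) := by simp [map_sub]
        rw [he]
        exact hAle n _
      have h1 : Tendsto (fun n => c * ‖((T n ∘L P n) ^ k) x - (S ^ k) x‖ +
          ‖T n (P n ((S ^ k) x)) - S ((S ^ k) x)‖) atTop (𝓝 0) := by
        have t1 : Tendsto (fun n => ‖((T n ∘L P n) ^ k) x - (S ^ k) x‖) atTop (𝓝 0) :=
          tendsto_iff_norm_sub_tendsto_zero.mp (ih x)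
        have t2 : Tendsto (fun n => ‖T n (P n ((S ^ k) x)) - S ((S ^ k) x)‖) atTop (𝓝 0) :=
          tendsto_iff_norm_sub_tendsto_zero.mp (hL ((S ^ k) x))
        simpa using (t1.const_mul c).add t2
      exact squeeze_zero (fun n => norm_nonneg _) hb h1
  intro n k h hh
  have hhn : P n h = h := hmem hh
  cases k with
  | zero => simpa using hhn
  | succ k =>
    have h1 : Tendsto (fun j => P n (((T j ∘L P j) ^ (k + 1)) h)) atTop
        (𝓝 (P n ((S ^ (k + 1)) h))) := ((P n).continuous.tendsto _).comp (hSpow (k + 1) h)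
    have h2 : ∀ᶠ j in atTop, P n (((T j ∘L P j) ^ (k + 1)) h) = (T n ^ (k + 1)) h := by
      filter_upwards [eventually_ge_atTop n] with j hj
      have hhj : P j h = h := by rw [← hhn, hPP hj]
      rw [hApow j k h, hhj, L1 n j hj (k + 1) h hhn]
    exact tendsto_nhds_unique (Tendsto.congr' h2 h1) tendsto_const_nhds
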